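/- Multi-step policy improvement: let Π be a set of Markov stationary policies in a finite MDP with deterministic transitions, and let π'_H(s) ∈ argmax_{a_{1:H} ∈ A^H} max_{π ∈ Π} Q_π(s, a_{1:H}) be the greedy H-step open-loop policy over the multi-step Q-functions. Then the value function V_{π'_H} (defined as the fixed point value of the H-step Bellman operator under π'_H, evaluated at π'_H(s)) satisfies V_{π'_H}(s) ≥ max_{a_{1:H}} max_{π ∈ Π} Q_π(s, a_{1:H}) ≥ max_a max_{π ∈ Π} Q_π(s, a) for all states s. -/

import Mathlib

/-- Deterministic rollout of an `H`-step action sequence from state `s`. -/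
def openRoll {S A : Type*} {H : ℕ} (f : S → A → S) (as : Fin H → A) (s : S) : ℕ → S
  | 0 => s
  | n + 1 => if h : n < H then f (openRoll f as s n) (as ⟨n, h⟩) else openRoll f as s n

/-- Trajectory of a deterministic Markov stationary policy `π`. -/
def polTraj {S A : Type*} (f : S → A → S) (π : S → A) (s : S) : ℕ → S
  | 0 => s
  | n + 1 => f (polTraj f π s n) (π (polTraj f π s n))

/-- Value function of a deterministic stationary policy `π`. -/
noncomputable def polValue {S A : Type*} (f : S → A → S) (r : S → A → ℝ) (γ : ℝ)
    (π : S → A) (s : S) : ℝ :=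
  ∑' n : ℕ, γ ^ n * r (polTraj f π s n) (π (polTraj f π s n))

/-- Multi-step Q-function of policy `π`: execute `a_{1:H}` from `s`, then follow `π`. -/
noncomputable def qMulti {S A : Type*} {H : ℕ} (f : S → A → S) (r : S → A → ℝ)
    (γ : ℝ) (π : S → A) (s : S) (as : Fin H → A) : ℝ :=
  (∑ h : Fin H, γ ^ (h : ℕ) * r (openRoll f as s h) (as h)) +
    γ ^ H * polValue f r γ π (openRoll f as s H)

/-- One-step Q-function of policy `π`. -/
noncomputable def qOne {S A : Type*} (f : S → A → S) (r : S → A → ℝ) (γ : ℝ)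
    (π : S → A) (s : S) (a : A) : ℝ :=
  r s a + γ * polValue f r γ π (f s a)

/-- The H-step open-loop Bellman operator for open-loop policy `π' : S → A^H`. -/
noncomputable def openBellman {S A : Type*} {H : ℕ} (f : S → A → S) (r : S → A → ℝ)
    (γ : ℝ) (π' : S → Fin H → A) (Q : S → (Fin H → A) → ℝ) :
    S → (Fin H → A) → ℝ :=
  fun s as =>
    (∑ h : Fin H, γ ^ (h : ℕ) * r (openRoll f as s h) (as h)) +
      γ ^ H * Q (openRoll f as s H) (π' (openRoll f as s H))

section AuxLemmas

variable {S A : Type*} (f : S → A → S) (r : S → A → ℝ) (π : S → A)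

lemma polTraj_succ_eq (s : S) (n : ℕ) :
    polTraj f π s (n + 1) = polTraj f π (f s (π s)) n := by
  induction n with
  | zero => rfl
  | succ n ih =>
    rw [show polTraj f π s (n + 1 + 1)
        = f (polTraj f π s (n + 1)) (π (polTraj f π s (n + 1))) from rfl, ih]
    rfl

variable {γ Rmax : ℝ}

lemma summable_pol (hγ0 : 0 ≤ γ) (hγ1 : γ < 1) (hr : ∀ s a, |r s a| ≤ Rmax) (s : S) :
    Summable (fun n => γ ^ n * r (polTraj f π s n) (π (polTraj f π s n))) := by
  apply Summable.of_norm_bounded (g := fun n => Rmax * γ ^ n)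
    ((summable_geometric_of_lt_one hγ0 hγ1).mul_left Rmax)
  intro n
  rw [norm_mul, norm_pow, Real.norm_eq_abs, Real.norm_eq_abs, abs_of_nonneg hγ0,
    mul_comm]
  exact mul_le_mul_of_nonneg_right (hr _ _) (pow_nonneg hγ0 n)

lemma polValue_step (hγ0 : 0 ≤ γ) (hγ1 : γ < 1) (hr : ∀ s a, |r s a| ≤ Rmax) (s : S) :
    polValue f r γ π s = r s (π s) + γ * polValue f r γ π (f s (π s)) := by
  unfold polValue
  rw [Summable.tsum_eq_zero_add (summable_pol f r π hγ0 hγ1 hr s)]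
  rw [pow_zero, one_mul, show polTraj f π s 0 = s from rfl]
  congr 1
  rw [← tsum_mul_left]
  apply tsum_congr
  intro n
  rw [polTraj_succ_eq f π s n]
  ring

lemma polValue_bound (hγ0 : 0 ≤ γ) (hγ1 : γ < 1) (hr : ∀ s a, |r s a| ≤ Rmax) (s : S) :
    |polValue f r γ π s| ≤ Rmax / (1 - γ) := by
  have hsum := summable_pol f r π hγ0 hγ1 hr s
  have hg : Summable (fun n : ℕ => Rmax * γ ^ n) :=
    (summable_geometric_of_lt_one hγ0 hγ1).mul_left Rmax
  calc |polValue f r γ π s|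
      ≤ ∑' n : ℕ, ‖γ ^ n * r (polTraj f π s n) (π (polTraj f π s n))‖ :=
        norm_tsum_le_tsum_norm hsum.norm
    _ ≤ ∑' n : ℕ, Rmax * γ ^ n := by
        apply Summable.tsum_le_tsum _ hsum.norm hg
        intro n
        rw [norm_mul, norm_pow, Real.norm_eq_abs, Real.norm_eq_abs, abs_of_nonneg hγ0,
          mul_comm]
        exact mul_le_mul_of_nonneg_right (hr _ _) (pow_nonneg hγ0 n)
    _ = Rmax / (1 - γ) := by
        rw [tsum_mul_left, tsum_geometric_of_lt_one hγ0 hγ1, div_eq_mul_inv]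

lemma polValue_expand (hγ0 : 0 ≤ γ) (hγ1 : γ < 1) (hr : ∀ s a, |r s a| ≤ Rmax)
    (K : ℕ) (s : S) :
    polValue f r γ π s =
      (∑ h : Fin K, γ ^ (h : ℕ) * r (polTraj f π s h) (π (polTraj f π s h))) +
        γ ^ K * polValue f r γ π (polTraj f π s K) := by
  induction K with
  | zero => simp [polTraj]
  | succ K ih =>
    rw [ih, polValue_step f r π hγ0 hγ1 hr (polTraj f π s K), Fin.sum_univ_castSucc]
    simp only [Fin.coe_castSucc, Fin.val_last]
    rw [show polTraj f π s (K + 1)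
        = f (polTraj f π s K) (π (polTraj f π s K)) from rfl]
    ring

lemma openRoll_polTraj {H : ℕ} (s : S) :
    ∀ n, n ≤ H →
      openRoll f (fun h : Fin H => π (polTraj f π s h)) s n = polTraj f π s n := by
  intro n
  induction n with
  | zero => intro _; rfl
  | succ n ih =>
    intro hn
    have hn' : n < H := hn
    rw [show openRoll f (fun h : Fin H => π (polTraj f π s h)) s (n + 1)
        = if h : n < H then
            f (openRoll f (fun h : Fin H => π (polTraj f π s h)) s n)
              (π (polTraj f π s ((⟨n, h⟩ : Fin H) : ℕ)))
          else openRoll f (fun h : Fin H => π (polTraj f π s h)) s n from rfl,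
      dif_pos hn', ih hn'.le]
    rfl

lemma qMulti_pol (hγ0 : 0 ≤ γ) (hγ1 : γ < 1) (hr : ∀ s a, |r s a| ≤ Rmax)
    {H : ℕ} (s : S) :
    qMulti f r γ π s (fun h : Fin H => π (polTraj f π s h)) = polValue f r γ π s := by
  unfold qMulti
  rw [polValue_expand f r π hγ0 hγ1 hr H s, openRoll_polTraj f π s H le_rfl]
  congr 1
  apply Finset.sum_congr rfl
  intro h _
  rw [openRoll_polTraj f π s h h.isLt.le]

lemma openRoll_cons {K : ℕ} (s : S) (a : A) (tail : Fin K → A) :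
    ∀ n, n ≤ K →
      openRoll f (Fin.cons a tail : Fin (K + 1) → A) s (n + 1)
        = openRoll f tail (f s a) n := by
  intro n
  induction n with
  | zero =>
    intro _
    rw [show openRoll f (Fin.cons a tail : Fin (K + 1) → A) s 1
        = if h : 0 < K + 1 then
            f (openRoll f (Fin.cons a tail : Fin (K+1) → A) s 0)
              ((Fin.cons a tail : Fin (K+1) → A) ⟨0, h⟩)
          else _ from rfl, dif_pos (Nat.succ_pos K)]
    rfl
  | succ n ih =>
    intro hn
    have hn' : n < K := hn
    have h1 : n + 1 < K + 1 := Nat.succ_lt_succ hn'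
    rw [show openRoll f (Fin.cons a tail : Fin (K + 1) → A) s (n + 1 + 1)
        = if h : n + 1 < K + 1 then
            f (openRoll f (Fin.cons a tail : Fin (K+1) → A) s (n + 1))
              ((Fin.cons a tail : Fin (K+1) → A) ⟨n + 1, h⟩)
          else _ from rfl, dif_pos h1, ih hn'.le]
    rw [show openRoll f tail (f s a) (n + 1)
        = if h : n < K then f (openRoll f tail (f s a) n) (tail ⟨n, h⟩)
          else _ from rfl, dif_pos hn']
    congr 1

lemma qOne_eq_qMulti (hγ0 : 0 ≤ γ) (hγ1 : γ < 1) (hr : ∀ s a, |r s a| ≤ Rmax)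
    {K : ℕ} (s : S) (a : A) :
    qOne f r γ π s a =
      qMulti f r γ π s
        (Fin.cons a (fun h : Fin K => π (polTraj f π (f s a) h)) : Fin (K+1) → A) := by
  unfold qOne qMulti
  rw [Fin.sum_univ_succ]
  rw [openRoll_cons f s a _ K le_rfl, openRoll_polTraj f π (f s a) K le_rfl]
  rw [polValue_expand f r π hγ0 hγ1 hr K (f s a)]
  simp only [Fin.val_succ, Fin.val_zero, pow_zero, one_mul, Fin.cons_zero, Fin.cons_succ]
  rw [show openRoll f
      (Fin.cons a (fun h : Fin K => π (polTraj f π (f s a) h)) : Fin (K+1) → A) s 0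
      = s from rfl]
  have hterm : ∀ i : Fin K,
      γ ^ ((i : ℕ) + 1) *
        r (openRoll f
            (Fin.cons a (fun h : Fin K => π (polTraj f π (f s a) h)) : Fin (K+1) → A)
            s ((i : ℕ) + 1))
          (π (polTraj f π (f s a) i))
      = γ * (γ ^ (i : ℕ) * r (polTraj f π (f s a) i) (π (polTraj f π (f s a) i))) := by
    intro i
    rw [openRoll_cons f s a _ i i.isLt.le, openRoll_polTraj f π (f s a) i i.isLt.le]
    ring
  rw [Finset.sum_congr rfl (fun i _ => hterm i), ← Finset.mul_sum]
  ring

end AuxLemmas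

/-- multi-step policy improvement, Theorem 2 of the paper: in a
deterministic finite MDP, if `πH'` is the greedy H-step open-loop policy over the
multi-step Q-functions of a finite nonempty class `Π` of stationary policies, and
`Qfix` is the (bounded) fixed point of the corresponding H-step open-loop Bellman
operator, then the value `V_{πH'}(s) = Qfix s (πH' s)` dominates
`max_{a_{1:H}} max_{π ∈ Π} Q_π(s, a_{1:H})`, which in turn dominates
`max_a max_{π ∈ Π} Q_π(s, a)`. -/
theorem multi_step_policy_improvement
    {S A : Type*} [Fintype A] [Nonempty A]
    (f : S → A → S) (r : S → A → ℝ) (γ : ℝ) (hγ0 : 0 ≤ γ) (hγ1 : γ < 1)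
    (Rmax : ℝ) (hr : ∀ s a, |r s a| ≤ Rmax)
    (H : ℕ) (hH : 1 ≤ H)
    (Pi : Finset (S → A)) (hPi : Pi.Nonempty)
    (πH' : S → Fin H → A)
    (hgreedy : ∀ s : S, ∀ as : Fin H → A,
      Pi.sup' hPi (fun π => qMulti f r γ π s as) ≤
        Pi.sup' hPi (fun π => qMulti f r γ π s (πH' s)))
    (Qfix : S → (Fin H → A) → ℝ)
    (hQfixBdd : ∃ C, ∀ s as, |Qfix s as| ≤ C)
    (hQfix : ∀ s as, Qfix s as = openBellman f r γ πH' Qfix s as) :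
    ∀ s : S,
      ((Finset.univ : Finset (Fin H → A)).sup' Finset.univ_nonempty
          (fun as => Pi.sup' hPi fun π => qMulti f r γ π s as) ≤
        Qfix s (πH' s)) ∧
      ((Finset.univ : Finset A).sup' Finset.univ_nonempty
          (fun a => Pi.sup' hPi fun π => qOne f r γ π s a) ≤
        (Finset.univ : Finset (Fin H → A)).sup' Finset.univ_nonempty
          (fun as => Pi.sup' hPi fun π => qMulti f r γ π s as)) := by
  intro s
  obtain ⟨C, hC⟩ := hQfixBdd
  obtain ⟨π₀, hπ₀⟩ := id hPi
  have hR0 : 0 ≤ Rmax := (abs_nonneg _).trans (hr s (π₀ s))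
  have hden : (0:ℝ) < 1 - γ := by linarith
  -- bound on qMulti
  have hVb : ∀ (π : S → A) (t : S), polValue f r γ π t ≤ Rmax / (1 - γ) := fun π t =>
    (abs_le.mp (polValue_bound f r π hγ0 hγ1 hr t)).2
  have hq_ub : ∀ (π : S → A) (t : S) (as : Fin H → A),
      qMulti f r γ π t as ≤ H * Rmax + Rmax / (1 - γ) := by
    intro π t as
    have h1 : (∑ h : Fin H, γ ^ (h : ℕ) * r (openRoll f as t h) (as h))
        ≤ (H : ℝ) * Rmax := by
      calc (∑ h : Fin H, γ ^ (h : ℕ) * r (openRoll f as t h) (as h))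
          ≤ ∑ _h : Fin H, Rmax := by
            apply Finset.sum_le_sum
            intro i _
            calc γ ^ (i : ℕ) * r (openRoll f as t i) (as i)
                ≤ γ ^ (i : ℕ) * Rmax :=
                  mul_le_mul_of_nonneg_left ((abs_le.mp (hr _ _)).2)
                    (pow_nonneg hγ0 _)
              _ ≤ 1 * Rmax :=
                  mul_le_mul_of_nonneg_right (pow_le_one₀ hγ0 hγ1.le) hR0
              _ = Rmax := one_mul _
        _ = (H : ℝ) * Rmax := by
            rw [Finset.sum_const, Finset.card_univ, Fintype.card_fin, nsmul_eq_mul]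
    have h2 : γ ^ H * polValue f r γ π (openRoll f as t H) ≤ Rmax / (1 - γ) := by
      calc γ ^ H * polValue f r γ π (openRoll f as t H)
          ≤ γ ^ H * (Rmax / (1 - γ)) :=
            mul_le_mul_of_nonneg_left (hVb π _) (pow_nonneg hγ0 _)
        _ ≤ 1 * (Rmax / (1 - γ)) :=
            mul_le_mul_of_nonneg_right (pow_le_one₀ hγ0 hγ1.le)
              (div_nonneg hR0 hden.le)
        _ = Rmax / (1 - γ) := one_mul _
    calc qMulti f r γ π t as
        = (∑ h : Fin H, γ ^ (h : ℕ) * r (openRoll f as t h) (as h)) +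
            γ ^ H * polValue f r γ π (openRoll f as t H) := rfl
      _ ≤ (H : ℝ) * Rmax + Rmax / (1 - γ) := add_le_add h1 h2
  -- shorthand
  set G : S → (Fin H → A) → ℝ :=
    fun t as => Pi.sup' hPi (fun π => qMulti f r γ π t as) with hGdef
  have hG_ub : ∀ t as, G t as ≤ (H : ℝ) * Rmax + Rmax / (1 - γ) :=
    fun t as => Finset.sup'_le _ _ (fun π _ => hq_ub π t as)
  set B : ℝ := (H : ℝ) * Rmax + Rmax / (1 - γ) + C with hBdef
  have hD_ub : ∀ t as, G t as - Qfix t as ≤ B := by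
    intro t as
    have h1 := (abs_le.mp (hC t as)).1
    have h2 := hG_ub t as
    rw [hBdef]
    linarith
  -- step inequality
  have hstep : ∀ (t : S) (as : Fin H → A),
      G t as - Qfix t as ≤ γ ^ H *
        (G (openRoll f as t H) (πH' (openRoll f as t H))
          - Qfix (openRoll f as t H) (πH' (openRoll f as t H))) := by
    intro t as
    have hgle : G t as ≤ (∑ h : Fin H, γ ^ (h : ℕ) * r (openRoll f as t h) (as h))
        + γ ^ H * G (openRoll f as t H) (πH' (openRoll f as t H)) := by
      apply Finset.sup'_le
      intro π hπ
      have hV : polValue f r γ π (openRoll f as t H)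
          ≤ G (openRoll f as t H) (πH' (openRoll f as t H)) := by
        rw [← qMulti_pol f r π hγ0 hγ1 hr (openRoll f as t H)]
        exact le_trans
          (Finset.le_sup' (fun π' => qMulti f r γ π' (openRoll f as t H)
            (fun h : Fin H => π (polTraj f π (openRoll f as t H) h))) hπ)
          (hgreedy (openRoll f as t H) _)
      have hmul := mul_le_mul_of_nonneg_left hV (pow_nonneg hγ0 H)
      calc qMulti f r γ π t as
          = (∑ h : Fin H, γ ^ (h : ℕ) * r (openRoll f as t h) (as h)) +
              γ ^ H * polValue f r γ π (openRoll f as t H) := rfl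
        _ ≤ _ := by linarith
    have hQ : Qfix t as = (∑ h : Fin H, γ ^ (h : ℕ) * r (openRoll f as t h) (as h))
        + γ ^ H * Qfix (openRoll f as t H) (πH' (openRoll f as t H)) := hQfix t as
    linarith
  -- iterate the step inequality
  set step : S × (Fin H → A) → S × (Fin H → A) := fun p =>
    (openRoll f p.2 p.1 H, πH' (openRoll f p.2 p.1 H)) with hstepdef
  have hiter : ∀ n (p : S × (Fin H → A)),
      G p.1 p.2 - Qfix p.1 p.2 ≤ (γ ^ H) ^ n * B := by
    intro n
    induction n with
    | zero => intro p; simpa using hD_ub p.1 p.2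
    | succ n ihn =>
      intro p
      calc G p.1 p.2 - Qfix p.1 p.2
          ≤ γ ^ H * (G (step p).1 (step p).2 - Qfix (step p).1 (step p).2) :=
            hstep p.1 p.2
        _ ≤ γ ^ H * ((γ ^ H) ^ n * B) :=
            mul_le_mul_of_nonneg_left (ihn (step p)) (pow_nonneg hγ0 _)
        _ = (γ ^ H) ^ (n + 1) * B := by ring
  have hγH : γ ^ H < 1 :=
    lt_of_le_of_lt (pow_le_of_le_one hγ0 hγ1.le (Nat.one_le_iff_ne_zero.mp hH)) hγ1
  have hlim : Filter.Tendsto (fun n : ℕ => (γ ^ H) ^ n * B) Filter.atTop (nhds 0) := by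
    have h := tendsto_pow_atTop_nhds_zero_of_lt_one (pow_nonneg hγ0 H) hγH
    simpa using h.mul_const B
  have hDle : ∀ (t : S) (as : Fin H → A), G t as ≤ Qfix t as := by
    intro t as
    have h0 : G t as - Qfix t as ≤ 0 :=
      ge_of_tendsto' hlim (fun n => hiter n (t, as))
    linarith
  constructor
  · apply Finset.sup'_le
    intro as _
    exact le_trans (hgreedy s as) (hDle s (πH' s))
  · apply Finset.sup'_le
    intro a _
    apply Finset.sup'_le
    intro π hπ
    obtain ⟨K, rfl⟩ : ∃ K, H = K + 1 := ⟨H - 1, (Nat.succ_pred_eq_of_pos hH).symm⟩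
    rw [qOne_eq_qMulti f r π hγ0 hγ1 hr s a]
    exact le_trans
      (Finset.le_sup'
        (fun π' => qMulti f r γ π' s
          (Fin.cons a (fun h : Fin K => π (polTraj f π (f s a) h)))) hπ)
      (Finset.le_sup'
        (fun as => Pi.sup' hPi fun π' => qMulti f r γ π' s as) (Finset.mem_univ _))
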